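/- Let P be a set of n points in convex position in the plane, with n even. Then there exist n/2 pairwise edge-disjoint non-crossing perfect matchings of P. Explicitly, labeling the points p_0,...,p_{n-1} in convex (radial) order, for each i with 0 <= i < n/2 the set M_i = { {p_{i+j-1}, p_{n+i-j}} : j = 1,...,n/2 } (indices modulo n) is a non-crossing perfect matching, and the matchings M_0,...,M_{n/2 - 1} are pairwise edge-disjoint. -/

import Mathlib

set_option linter.unusedVariables false
set_option linter.unusedSectionVars false

open Set
open Fin.NatCast

noncomputable section Geom

abbrev E2 := EuclideanSpace ℝ (Fin 2)

lemma fin_cast_inj {n : ℕ} [NeZero n] {a b : ℕ} (ha : a < n) (hb : b < n)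
    (h : (a : Fin n) = b) : a = b := by
  have := congrArg Fin.val h
  rwa [Fin.val_natCast, Fin.val_natCast, Nat.mod_eq_of_lt ha, Nat.mod_eq_of_lt hb] at this

lemma fin_cast_ne {n : ℕ} [NeZero n] {a b : ℕ} (ha : a < n) (hb : b < n) (h : a ≠ b) :
    (a : Fin n) ≠ b := fun he => h (fin_cast_inj ha hb he)

def ev (A B : ℝ) (x : E2) : ℝ := A * x 0 + B * x 1

def cr (a b x : E2) : ℝ := (b 0 - a 0) * (x 1 - a 1) - (b 1 - a 1) * (x 0 - a 0)

variable {n : ℕ} [NeZero n] {p : Fin n → E2}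

lemma mid_absurd (hinj : Function.Injective p)
    (hconv : ∀ i, p i ∉ convexHull ℝ (Set.range p \ {p i}))
    {a b c : Fin n} (hba : b ≠ a) (hbc : b ≠ c)
    (h : p b ∈ segment ℝ (p a) (p c)) : False := by
  apply hconv b
  have hsub : {p a, p c} ⊆ Set.range p \ {p b} := by
    rintro x (rfl | rfl)
    · exact ⟨Set.mem_range_self _, fun hx => hba (hinj (Set.mem_singleton_iff.mp hx)).symm⟩
    · exact ⟨Set.mem_range_self _, fun hx => hbc (hinj (Set.mem_singleton_iff.mp hx)).symm⟩
  exact convexHull_mono hsub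
    (segment_subset_convexHull (Set.mem_insert _ _) (by simp) h)

lemma no3 (hinj : Function.Injective p)
    (hconv : ∀ i, p i ∉ convexHull ℝ (Set.range p \ {p i}))
    {a b c : Fin n} (hab : a ≠ b) (hac : a ≠ c) (hbc : b ≠ c)
    (h : Collinear ℝ ({p a, p b, p c} : Set E2)) : False := by
  rcases h.wbtw_or_wbtw_or_wbtw with hw | hw | hw
  · exact mid_absurd hinj hconv hab.symm hbc (mem_segment_iff_wbtw.mpr hw)
  · exact mid_absurd hinj hconv hbc.symm hac.symm (mem_segment_iff_wbtw.mpr hw)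
  · exact mid_absurd hinj hconv hac hab (mem_segment_iff_wbtw.mpr hw)

lemma cr_param {a b x : E2} (hab : a ≠ b) (h : cr a b x = 0) :
    ∃ τ : ℝ, x = a + τ • (b - a) := by
  have hne : ¬ ((b 0 - a 0 = 0) ∧ (b 1 - a 1 = 0)) := by
    rintro ⟨h0, h1⟩
    apply hab
    ext i
    fin_cases i
    · show a 0 = b 0; linarith
    · show a 1 = b 1; linarith
  rcases not_and_or.mp hne with h0 | h1
  · refine ⟨(x 0 - a 0) / (b 0 - a 0), ?_⟩
    ext i
    fin_cases i
    · show x 0 = (a + _ • (b - a)) 0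
      simp only [PiLp.add_apply, PiLp.smul_apply, PiLp.sub_apply, smul_eq_mul]
      field_simp
      ring
    · show x 1 = (a + _ • (b - a)) 1
      simp only [PiLp.add_apply, PiLp.smul_apply, PiLp.sub_apply, smul_eq_mul]
      unfold cr at h
      field_simp
      first
      | linear_combination h
      | linear_combination -h
      | nlinarith [h, sq_nonneg (b 0 - a 0)]
  · refine ⟨(x 1 - a 1) / (b 1 - a 1), ?_⟩
    ext i
    fin_cases i
    · show x 0 = (a + _ • (b - a)) 0
      simp only [PiLp.add_apply, PiLp.smul_apply, PiLp.sub_apply, smul_eq_mul]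
      unfold cr at h
      field_simp
      first
      | linear_combination h
      | linear_combination -h
      | nlinarith [h, sq_nonneg (b 1 - a 1)]
    · show x 1 = (a + _ • (b - a)) 1
      simp only [PiLp.add_apply, PiLp.smul_apply, PiLp.sub_apply, smul_eq_mul]
      field_simp
      ring

lemma cr_collinear {a b x : E2} (hab : a ≠ b) (h : cr a b x = 0) :
    Collinear ℝ ({a, b, x} : Set E2) := by
  obtain ⟨τ, hτ⟩ := cr_param hab h
  rw [collinear_iff_exists_forall_eq_smul_vadd]
  refine ⟨a, b - a, ?_⟩
  rintro y (rfl | rfl | rfl)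
  · exact ⟨0, by simp⟩
  · exact ⟨1, by simp⟩
  · exact ⟨τ, by rw [hτ]; simp [vadd_eq_add]; abel⟩

end Geom

section Geom2
variable {n : ℕ} [NeZero n] {p : Fin n → E2}

lemma ev_lin (A B : ℝ) (s t : ℝ) (x y : E2) :
    ev A B (s • x + t • y) = s * ev A B x + t * ev A B y := by
  simp only [ev, PiLp.add_apply, PiLp.smul_apply, smul_eq_mul]
  ring

lemma fin_shift_ne {u : Fin n} {s t : ℕ} (hs : s < n) (ht : t < n) (hst : s ≠ t) :
    u + (s : Fin n) ≠ u + (t : Fin n) := by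
  intro h
  have h2 : (s : Fin n) = (t : Fin n) := by
    have := add_left_cancel h
    exact this
  exact hst (fin_cast_inj hs ht h2)

lemma edge_support (hn3 : 3 ≤ n) (hinj : Function.Injective p)
    (hconv : ∀ i, p i ∉ convexHull ℝ (Set.range p \ {p i}))
    (hconsec : ∀ i : Fin n,
      segment ℝ (p i) (p (i + 1)) ⊆ frontier (convexHull ℝ (Set.range p)))
    (j : Fin n) :
    ∃ A B c : ℝ, ev A B (p j) = c ∧ ev A B (p (j + 1)) = c ∧
      ∀ w : Fin n, w ≠ j → w ≠ j + 1 → ev A B (p w) < c := by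
  classical
  set K := convexHull ℝ (Set.range p) with hK
  have hKconv : Convex ℝ K := convex_convexHull ℝ _
  -- no collinear triple among p's
  have h10 : (1 : Fin n) ≠ 0 := by
    have : ((1:ℕ) : Fin n) ≠ ((0:ℕ) : Fin n) := fin_cast_ne (by omega) (by omega) (by omega)
    simpa using this
  -- range p not collinear
  have hncol : ¬ Collinear ℝ (Set.range p) := by
    intro hcol
    have hsub : ({p j, p (j+1), p (j+2)} : Set E2) ⊆ Set.range p := by
      rintro x (rfl | rfl | rfl) <;> exact Set.mem_range_self _
    have hj1 : j ≠ j + 1 := by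
      have := @fin_shift_ne n _ j 0 1 (by omega) (by omega) (by omega)
      simpa using this
    have hj2 : j ≠ j + 2 := by
      have := @fin_shift_ne n _ j 0 2 (by omega) (by omega) (by omega)
      simpa using this
    have hj12 : j + 1 ≠ j + 2 := by
      have := @fin_shift_ne n _ j 1 2 (by omega) (by omega) (by omega)
      simpa using this
    exact no3 hinj hconv hj1 hj2 hj12 (hcol.subset hsub)
  -- affine span is top
  have htop : affineSpan ℝ (Set.range p) = ⊤ := by
    have hne : (Set.range p).Nonempty := ⟨p j, Set.mem_range_self _⟩
    rw [AffineSubspace.affineSpan_eq_top_iff_vectorSpan_eq_top_of_nonempty ℝ E2 E2 hne]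
    by_contra hvne
    apply hncol
    rw [collinear_iff_finrank_le_one]
    have hlt : Module.finrank ℝ (vectorSpan ℝ (Set.range p)) < Module.finrank ℝ E2 :=
      Submodule.finrank_lt hvne
    rw [finrank_euclideanSpace_fin] at hlt
    omega
  have hint : (interior K).Nonempty := by
    rw [hKconv.interior_nonempty_iff_affineSpan_eq_top, affineSpan_convexHull]
    exact htop
  -- supporting functional at edge midpoint
  set x := midpoint ℝ (p j) (p (j + 1)) with hx
  have hxf : x ∈ frontier K := hconsec j (midpoint_mem_segment _ _)
  have hxni : x ∉ interior K := hxf.2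
  obtain ⟨f, hf⟩ := geometric_hahn_banach_open_point hKconv.interior isOpen_interior hxni
  have hle : ∀ y ∈ K, f y ≤ f x := by
    intro y hy
    by_contra hlt
    push_neg at hlt
    obtain ⟨z, hz⟩ := hint
    have hfz : f z < f x := hf z hz
    set t : ℝ := (f x - f z) / (f y - f z) with htdef
    have hyz : f z < f y := lt_trans hfz hlt
    have ht0 : 0 < t := div_pos (by linarith) (by linarith)
    have ht1 : t < 1 := by
      rw [div_lt_one (by linarith)]; linarith
    have hmem : (1 - t) • z + t • y ∈ interior K :=
      hKconv.openSegment_interior_self_subset_interior hz hy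
        ⟨1 - t, t, by linarith, ht0, by ring, rfl⟩
    have := hf _ hmem
    rw [map_add, map_smul, map_smul] at this
    simp only [smul_eq_mul] at this
    have hfx : (1 - t) * f z + t * f y = f x := by
      have hne0 : f y - f z ≠ 0 := by linarith
      rw [htdef]; field_simp; ring
    linarith
  have hpj : f (p j) ≤ f x := hle _ (subset_convexHull ℝ _ (Set.mem_range_self _))
  have hpj1 : f (p (j+1)) ≤ f x := hle _ (subset_convexHull ℝ _ (Set.mem_range_self _))
  have hmid : f x = 2⁻¹ * (f (p j) + f (p (j+1))) := by
    rw [hx, midpoint_eq_smul_add, map_smul, map_add]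
    norm_num
  have hepj : f (p j) = f x := by linarith
  have hepj1 : f (p (j+1)) = f x := by linarith
  -- coordinates of f
  set A := f (EuclideanSpace.single (0 : Fin 2) (1:ℝ)) with hA
  set B := f (EuclideanSpace.single (1 : Fin 2) (1:ℝ)) with hB
  have hev : ∀ v : E2, f v = ev A B v := by
    intro v
    have hv : v = v 0 • EuclideanSpace.single (0 : Fin 2) (1:ℝ)
        + v 1 • EuclideanSpace.single (1 : Fin 2) (1:ℝ) := by
      ext i
      fin_cases i
      · show v 0 = (v 0 • EuclideanSpace.single (0 : Fin 2) (1:ℝ)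
            + v 1 • EuclideanSpace.single (1 : Fin 2) (1:ℝ)) 0
        simp [PiLp.add_apply, PiLp.smul_apply, EuclideanSpace.single_apply]
      · show v 1 = (v 0 • EuclideanSpace.single (0 : Fin 2) (1:ℝ)
            + v 1 • EuclideanSpace.single (1 : Fin 2) (1:ℝ)) 1
        simp [PiLp.add_apply, PiLp.smul_apply, EuclideanSpace.single_apply]
    conv_lhs => rw [hv]
    rw [map_add, map_smul, map_smul]
    simp only [smul_eq_mul, ev, ← hA, ← hB]
    ring
  refine ⟨A, B, f x, (hev _).symm.trans hepj, (hev _).symm.trans hepj1, ?_⟩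
  intro w hw1 hw2
  have hwle : f (p w) ≤ f x := hle _ (subset_convexHull ℝ _ (Set.mem_range_self _))
  rcases lt_or_eq_of_le hwle with hlt | heqw
  · rw [← hev]; exact hlt
  · exfalso
    -- three points with equal f-value: collinear
    have hAB : ¬ (A = 0 ∧ B = 0) := by
      rintro ⟨hA0, hB0⟩
      obtain ⟨z, hz⟩ := hint
      have h1 : f z < f x := hf z hz
      rw [hev z, hev x, hA0, hB0] at h1
      simp [ev] at h1
    set d0 := (p (j+1)) 0 - (p j) 0
    set d1 := (p (j+1)) 1 - (p j) 1
    set e0 := (p w) 0 - (p j) 0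
    set e1 := (p w) 1 - (p j) 1
    have heqd : A * d0 + B * d1 = 0 := by
      have h1 := hev (p (j+1))
      have h2 := hev (p j)
      simp only [ev] at h1 h2
      simp only [d0, d1]
      rw [hepj1] at h1
      rw [hepj] at h2
      linarith [h1, h2]
    have heqe : A * e0 + B * e1 = 0 := by
      have h1 := hev (p w)
      have h2 := hev (p j)
      simp only [ev] at h1 h2
      simp only [e0, e1]
      rw [heqw] at h1
      rw [hepj] at h2
      linarith [h1, h2]
    have hcr : cr (p j) (p (j+1)) (p w) = 0 := by
      have hcrdef : cr (p j) (p (j+1)) (p w) = d0 * e1 - d1 * e0 := by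
        simp only [cr, d0, d1, e0, e1]
      rcases not_and_or.mp hAB with hA0 | hB0
      · have : A * (d0 * e1 - d1 * e0) = 0 := by linear_combination e1 * heqd - d1 * heqe
        rw [hcrdef]
        rcases mul_eq_zero.mp this with h | h
        · exact absurd h hA0
        · exact h
      · have : B * (d0 * e1 - d1 * e0) = 0 := by linear_combination d0 * heqe - e0 * heqd
        rw [hcrdef]
        rcases mul_eq_zero.mp this with h | h
        · exact absurd h hB0
        · exact h
    have hj1 : j ≠ j + 1 := by
      have := @fin_shift_ne n _ j 0 1 (by omega) (by omega) (by omega)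
      simpa using this
    exact no3 hinj hconv hj1 (Ne.symm hw1) (Ne.symm hw2)
      (cr_collinear (fun h => hj1 (hinj h)) hcr)

end Geom2

section Geom3
open Fin.CommRing
variable {n : ℕ} [NeZero n] {p : Fin n → E2}

lemma ev_combo (A B s : ℝ) (x y : E2) :
    ev A B (x + s • (y - x)) = (1 - s) * ev A B x + s * ev A B y := by
  simp only [ev, PiLp.add_apply, PiLp.smul_apply, PiLp.sub_apply, smul_eq_mul]
  ring

lemma arc_support (hn3 : 3 ≤ n) (hinj : Function.Injective p)
    (hconv : ∀ i, p i ∉ convexHull ℝ (Set.range p \ {p i}))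
    (hconsec : ∀ i : Fin n,
      segment ℝ (p i) (p (i + 1)) ⊆ frontier (convexHull ℝ (Set.range p)))
    (u : Fin n) (K : ℕ) (hK0 : 0 < K) (hKn : K < n) :
    ∃ A B c : ℝ, ev A B (p u) = c ∧ ev A B (p (u + (K : Fin n))) = c ∧
      ∀ t : ℕ, 0 < t → t < K → ev A B (p (u + (t : Fin n))) < c := by
  classical
  set a := p u with ha_def
  set b := p (u + (K : Fin n)) with hb_def
  have hune : u ≠ u + (K : Fin n) := by
    have h := fin_shift_ne (u := u) (s := 0) (t := K) (by omega) hKn (by omega)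
    simpa using h
  have hab : a ≠ b := fun h => hune (hinj h)
  set A0 : ℝ := -(b 1 - a 1) with hA0
  set B0 : ℝ := b 0 - a 0 with hB0
  set c0 : ℝ := ev A0 B0 a with hc0
  have hevb : ev A0 B0 b = c0 := by simp only [ev, hA0, hB0, hc0]; ring
  have hcr_ev : ∀ x : E2, ev A0 B0 x - c0 = cr a b x := by
    intro x; simp only [ev, hA0, hB0, hc0, cr]; ring
  set g : ℕ → ℝ := fun t => ev A0 B0 (p (u + (t : Fin n))) - c0 with hg
  have hgne : ∀ t, 0 < t → t < K → g t ≠ 0 := by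
    intro t ht0 htK h0
    have hcr : cr a b (p (u + (t : Fin n))) = 0 := by rw [← hcr_ev]; exact h0
    have h1 : u ≠ u + (t : Fin n) := by
      have h := fin_shift_ne (u := u) (s := 0) (t := t) (by omega) (by omega) (by omega)
      simpa using h
    have h2 : u + (K : Fin n) ≠ u + (t : Fin n) :=
      fin_shift_ne hKn (by omega) (by omega)
    exact no3 hinj hconv hune h1 h2 (cr_collinear hab hcr)
  by_cases hpos : ∀ t, 0 < t → t < K → g t < 0
  · refine ⟨A0, B0, c0, rfl, hevb, fun t ht0 htK => ?_⟩
    have h := hpos t ht0 htK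
    simp only [hg] at h
    linarith
  by_cases hneg : ∀ t, 0 < t → t < K → 0 < g t
  · refine ⟨-A0, -B0, -c0, by simp only [ev] at *; linarith, ?_, ?_⟩
    · simp only [ev] at hevb ⊢; linarith
    · intro t ht0 htK
      have h := hneg t ht0 htK
      simp only [hg] at h
      simp only [ev] at h ⊢
      linarith
  exfalso
  push_neg at hpos hneg
  obtain ⟨t1, ht10, ht1K, ht1⟩ := hpos
  obtain ⟨t2, ht20, ht2K, ht2⟩ := hneg
  have hgt1 : 0 < g t1 := lt_of_le_of_ne ht1 (Ne.symm (hgne t1 ht10 ht1K))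
  have hgt2 : g t2 < 0 := lt_of_le_of_ne ht2 (hgne t2 ht20 ht2K)
  -- find adjacent sign flip
  have hadj : ∃ r, 0 < r ∧ r + 1 < K ∧
      ((0 < g r ∧ g (r + 1) < 0) ∨ (g r < 0 ∧ 0 < g (r + 1))) := by
    by_contra hno
    push_neg at hno
    have mono : ∀ t, 0 < t → t < K → (0 < g t ↔ 0 < g 1) := by
      intro t
      induction t with
      | zero => intro h; exact absurd h (lt_irrefl 0)
      | succ s ih =>
        intro hs0 hsK
        rcases Nat.eq_zero_or_pos s with rfl | hspos
        · norm_num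
        · have hsK' : s < K := by omega
          have ihs := ih hspos hsK'
          have hr1K : s + 1 < K := hsK
          rcases lt_or_gt_of_ne (hgne s hspos hsK') with hsneg | hspos2
          · rcases lt_or_gt_of_ne (hgne (s+1) hs0 hsK) with h1neg | h1pos
            · exact iff_of_false (not_lt.mpr h1neg.le)
                (fun h1 => absurd (ihs.mpr h1) (not_lt.mpr hsneg.le))
            · have := (hno s hspos hr1K).2 hsneg; linarith
          · rcases lt_or_gt_of_ne (hgne (s+1) hs0 hsK) with h1neg | h1pos
            · have := (hno s hspos hr1K).1 hspos2; linarith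
            · exact iff_of_true h1pos (ihs.mp hspos2)
    have h1 : 0 < g 1 := (mono t1 ht10 ht1K).mp hgt1
    exact absurd ((mono t2 ht20 ht2K).mpr h1) (not_lt.mpr hgt2.le)
  obtain ⟨r, hr0, hr1K, hsigns⟩ := hadj
  set q1 := p (u + (r : Fin n)) with hq1_def
  set q2 := p (u + ((r + 1 : ℕ) : Fin n)) with hq2_def
  set D : ℝ := g r - g (r + 1) with hD_def
  have hD : D ≠ 0 := by
    rcases hsigns with ⟨h1, h2⟩ | ⟨h1, h2⟩ <;> (intro h; rw [hD_def] at h; linarith)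
  set lam : ℝ := g r / D with hlam_def
  have hlamD : lam * D = g r := by rw [hlam_def]; field_simp
  have hlam0 : 0 < lam := by
    rcases hsigns with ⟨h1, h2⟩ | ⟨h1, h2⟩
    · exact div_pos h1 (by rw [hD_def]; linarith)
    · exact div_pos_of_neg_of_neg h1 (by rw [hD_def]; linarith)
  have hlam1 : lam < 1 := by
    have h1m : 1 - lam = -g (r + 1) / D := by
      rw [hlam_def]; field_simp; rw [hD_def]; ring
    have : 0 < 1 - lam := by
      rw [h1m]
      rcases hsigns with ⟨h1, h2⟩ | ⟨h1, h2⟩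
      · exact div_pos (by linarith) (by rw [hD_def]; linarith)
      · exact div_pos_of_neg_of_neg (by linarith) (by rw [hD_def]; linarith)
    linarith
  set y : E2 := q1 + lam • (q2 - q1) with hy_def
  have hyseg : y ∈ segment ℝ q1 q2 := by
    refine ⟨1 - lam, lam, by linarith, hlam0.le, by ring, ?_⟩
    rw [hy_def]; module
  have hgr : ev A0 B0 q1 = c0 + g r := by simp only [hg]; ring
  have hgr1 : ev A0 B0 q2 = c0 + g (r + 1) := by simp only [hg]; ring
  have hyev : ev A0 B0 y = c0 := by
    rw [hy_def, ev_combo, hgr, hgr1]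
    simp only [hD_def] at hlamD
    linarith [hlamD]
  have hycr : cr a b y = 0 := by rw [← hcr_ev]; linarith
  obtain ⟨tau, htau⟩ := cr_param hab hycr
  -- supporting line of the polygon edge (u+r, u+r+1)
  obtain ⟨A1, B1, c1, he1, he2, hstrict⟩ := edge_support hn3 hinj hconv hconsec (u + (r : Fin n))
  have hidx : u + ((r + 1 : ℕ) : Fin n) = (u + (r : Fin n)) + 1 := by push_cast; ring
  have he2' : ev A1 B1 q2 = c1 := by rw [hq2_def, hidx]; exact he2
  have hyc1 : ev A1 B1 y = c1 := by
    rw [hy_def, ev_combo, he1, he2']; ring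
  have hrn : r < n := by omega
  have hr1n : r + 1 < n := by omega
  have hua : u ≠ u + (r : Fin n) := by
    have h := fin_shift_ne (u := u) (s := 0) (t := r) (by omega) hrn (by omega)
    simpa using h
  have hua1 : u ≠ (u + (r : Fin n)) + 1 := by
    rw [← hidx]
    have h := fin_shift_ne (u := u) (s := 0) (t := r + 1) (by omega) hr1n (by omega)
    simpa using h
  have hstricta : ev A1 B1 a < c1 := hstrict u hua hua1
  have hba' : u + (K : Fin n) ≠ u + (r : Fin n) := fin_shift_ne hKn hrn (by omega)
  have hba1 : u + (K : Fin n) ≠ (u + (r : Fin n)) + 1 := by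
    rw [← hidx]; exact fin_shift_ne hKn hr1n (by omega)
  have hstrictb : ev A1 B1 b < c1 := hstrict _ hba' hba1
  have hytau : ev A1 B1 y = (1 - tau) * ev A1 B1 a + tau * ev A1 B1 b := by
    rw [htau]
    have := ev_combo A1 B1 tau a b
    convert this using 3
  have hτout : tau < 0 ∨ 1 < tau := by
    by_contra hcon
    push_neg at hcon
    obtain ⟨h0, h1⟩ := hcon
    have heq : (1 - tau) * ev A1 B1 a + tau * ev A1 B1 b = c1 := by rw [← hytau, hyc1]
    have z1 : 0 ≤ (1 - tau) * (c1 - ev A1 B1 a) := mul_nonneg (by linarith) (by linarith)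
    have z2 : 0 ≤ tau * (c1 - ev A1 B1 b) := mul_nonneg h0 (by linarith)
    have zsum : (1 - tau) * (c1 - ev A1 B1 a) + tau * (c1 - ev A1 B1 b) = 0 := by
      linear_combination -heq
    have z1' : (1 - tau) * (c1 - ev A1 B1 a) = 0 := by linarith
    have z2' : tau * (c1 - ev A1 B1 b) = 0 := by linarith
    rcases mul_eq_zero.mp z1' with h | h
    · have htau1 : tau = 1 := by linarith
      rw [htau1, one_mul] at z2'
      linarith
    · linarith
  -- q1 q2 are distinct from a and b
  have hq1a : q1 ≠ a := by
    intro h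
    exact hua (hinj h).symm
  have hq2a : q2 ≠ a := by
    intro h
    apply hua1
    rw [← hidx]
    exact (hinj h).symm
  have hq1b : q1 ≠ b := fun h => hba' (hinj h).symm
  have hq2b : q2 ≠ b := by
    intro h
    apply hba1
    rw [← hidx]
    exact (hinj h).symm
  rcases hτout with htn | htp
  · -- tau < 0 : a is between y and b
    set mu : ℝ := tau / (tau - 1) with hmu_def
    have hmu0 : 0 < mu := div_pos_of_neg_of_neg (by linarith) (by linarith)
    have htau1 : tau - 1 ≠ 0 := by intro h; linarith
    have hmu1 : mu < 1 := by
      have h1m : 1 - mu = -1 / (tau - 1) := by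
        rw [hmu_def]; field_simp
        ring
      have : 0 < 1 - mu := by
        rw [h1m]; exact div_pos_of_neg_of_neg (by norm_num) (by linarith)
      linarith
    have hcoef : (1 - mu) * tau + mu = 0 := by
      rw [hmu_def]; field_simp
      ring
    have haseg : a ∈ segment ℝ y b := by
      refine ⟨1 - mu, mu, by linarith, hmu0.le, by ring, ?_⟩
      rw [htau]
      have hexp : (1 - mu) • (a + tau • (b - a)) + mu • b
          = a + ((1 - mu) * tau + mu) • (b - a) := by module
      rw [hexp, hcoef]; simp
    set S : Set E2 := Set.range p \ {a} with hS_def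
    have hq1S : q1 ∈ S := ⟨Set.mem_range_self _, by simpa using hq1a⟩
    have hq2S : q2 ∈ S := ⟨Set.mem_range_self _, by simpa using hq2a⟩
    have hbS : b ∈ S := ⟨Set.mem_range_self _, by simpa using hab.symm⟩
    have hyS : y ∈ convexHull ℝ S := segment_subset_convexHull hq1S hq2S hyseg
    have haS : a ∈ convexHull ℝ S :=
      (convex_convexHull ℝ S).segment_subset hyS (subset_convexHull ℝ S hbS) haseg
    exact hconv u haS
  · -- 1 < tau : b is between y and a
    set mu : ℝ := 1 / tau with hmu_def
    have hmu0 : 0 < mu := by positivity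
    have hmu1 : mu < 1 := by
      rw [hmu_def]; rw [div_lt_one (by linarith)]; linarith
    have hbseg : b ∈ segment ℝ y a := by
      refine ⟨mu, 1 - mu, hmu0.le, by linarith, by ring, ?_⟩
      rw [htau]
      have hexp : mu • (a + tau • (b - a)) + (1 - mu) • a
          = a + (mu * tau) • (b - a) := by module
      rw [hexp]
      have : mu * tau = 1 := by rw [hmu_def]; field_simp
      rw [this]; simp
    set S : Set E2 := Set.range p \ {b} with hS_def
    have hq1S : q1 ∈ S := ⟨Set.mem_range_self _, by simpa using hq1b⟩
    have hq2S : q2 ∈ S := ⟨Set.mem_range_self _, by simpa using hq2b⟩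
    have haS : a ∈ S := ⟨Set.mem_range_self _, by simpa using hab⟩
    have hyS : y ∈ convexHull ℝ S := segment_subset_convexHull hq1S hq2S hyseg
    have hbS : b ∈ convexHull ℝ S :=
      (convex_convexHull ℝ S).segment_subset hyS (subset_convexHull ℝ S haS) hbseg
    exact hconv (u + (K : Fin n)) hbS

end Geom3

section Final
open Fin.CommRing
variable {n : ℕ} [NeZero n] {p : Fin n → E2}

lemma chords_disj (hn3 : 3 ≤ n) (hinj : Function.Injective p)
    (hconv : ∀ i, p i ∉ convexHull ℝ (Set.range p \ {p i}))
    (hconsec : ∀ i : Fin n,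
      segment ℝ (p i) (p (i + 1)) ⊆ frontier (convexHull ℝ (Set.range p)))
    (u : Fin n) (K s t : ℕ) (hKn : K < n) (hs0 : 0 < s) (hsK : s < K)
    (ht0 : 0 < t) (htK : t < K) {x : E2}
    (hx1 : x ∈ openSegment ℝ (p u) (p (u + (K : Fin n))))
    (hx2 : x ∈ openSegment ℝ (p (u + (s : Fin n))) (p (u + (t : Fin n)))) : False := by
  obtain ⟨A, B, c, h1, h2, h3⟩ :=
    arc_support hn3 hinj hconv hconsec u K (by omega) hKn
  obtain ⟨α, β, hα, hβ, hαβ, hxe⟩ := hx1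
  obtain ⟨γ, δ, hγ, hδ, hγδ, hxe2⟩ := hx2
  have e1 : ev A B x = c := by
    rw [← hxe, ev_lin, h1, h2]
    linear_combination c * hαβ
  have hs3 := h3 s hs0 hsK
  have ht3 := h3 t ht0 htK
  have e2 : ev A B x < c := by
    rw [← hxe2, ev_lin]
    have m1 : γ * ev A B (p (u + (s : Fin n))) < γ * c := by
      exact mul_lt_mul_of_pos_left hs3 hγ
    have m2 : δ * ev A B (p (u + (t : Fin n))) < δ * c := by
      exact mul_lt_mul_of_pos_left ht3 hδ
    have hsum : γ * c + δ * c = c := by linear_combination c * hγδ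
    linarith
  linarith

lemma crossing_core (hinj : Function.Injective p)
    (hconv : ∀ i, p i ∉ convexHull ℝ (Set.range p \ {p i}))
    (hconsec : ∀ i : Fin n,
      segment ℝ (p i) (p (i + 1)) ⊆ frontier (convexHull ℝ (Set.range p)))
    (i a b : ℕ) (hab : a < b) (hb : b < n / 2) {x : E2}
    (hx1 : x ∈ openSegment ℝ (p ((i : Fin n) + (a : Fin n)))
      (p ((i : Fin n) - 1 - (a : Fin n))))
    (hx2 : x ∈ openSegment ℝ (p ((i : Fin n) + (b : Fin n)))
      (p ((i : Fin n) - 1 - (b : Fin n)))) : False := by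
  have hn4 : 4 ≤ n := by omega
  have h2b : 2 * b ≤ n - 2 := by omega
  set u : Fin n := (i : Fin n) + (a : Fin n) with hu_def
  set K : ℕ := n - 1 - 2 * a with hK_def
  set s : ℕ := b - a with hs_def
  set t : ℕ := n - 1 - a - b with ht_def
  have hKcast : ((K : ℕ) : Fin n) = -1 - 2 * (a : Fin n) := by
    have he : (K : ℕ) = n - (1 + 2 * a) := by omega
    rw [he, Nat.cast_sub (by omega)]
    push_cast
    rw [Fin.natCast_self]
    ring
  have hscast : ((s : ℕ) : Fin n) = (b : Fin n) - (a : Fin n) := by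
    rw [hs_def, Nat.cast_sub (by omega)]
  have htcast : ((t : ℕ) : Fin n) = -1 - (a : Fin n) - (b : Fin n) := by
    have he : (t : ℕ) = n - (1 + a + b) := by omega
    rw [he, Nat.cast_sub (by omega)]
    push_cast
    rw [Fin.natCast_self]
    ring
  have hidx1 : (i : Fin n) - 1 - (a : Fin n) = u + ((K : ℕ) : Fin n) := by
    rw [hKcast, hu_def]; ring
  have hidx2 : (i : Fin n) + (b : Fin n) = u + ((s : ℕ) : Fin n) := by
    rw [hscast, hu_def]; ring
  have hidx3 : (i : Fin n) - 1 - (b : Fin n) = u + ((t : ℕ) : Fin n) := by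
    rw [htcast, hu_def]; ring
  rw [hidx1] at hx1
  rw [hidx2, hidx3] at hx2
  exact chords_disj (by omega) hinj hconv hconsec u K s t (by omega) (by omega)
    (by omega) (by omega) (by omega) hx1 hx2

end Final

section Arith
open Fin.CommRing
variable {n : ℕ} [NeZero n]

lemma neg_one_sub_val (x : Fin n) : ((-1 : Fin n) - x) = ((n - 1 - x.val : ℕ) : Fin n) := by
  have h1 : 1 + x.val ≤ n := by omega
  have h2 : (n : ℕ) - 1 - x.val = n - (1 + x.val) := by omega
  rw [h2, Nat.cast_sub h1]
  push_cast
  rw [Fin.natCast_self]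
  ring

lemma val_neg_one_sub (x : Fin n) : ((-1 : Fin n) - x).val = n - 1 - x.val := by
  rw [neg_one_sub_val, Fin.val_natCast, Nat.mod_eq_of_lt (by omega)]

lemma matching_lemma (hn : Even n) (i : ℕ) (hi : i < n / 2) (v : Fin n) :
    ∃! e, e ∈ (Finset.range (n / 2)).image
      (fun a : ℕ => s((i : Fin n) + (a : Fin n), (i : Fin n) - 1 - (a : Fin n))) ∧ v ∈ e := by
  obtain ⟨m, hm⟩ := hn
  have hm2 : n / 2 = m := by omega
  have hn1 : 1 ≤ n := Nat.one_le_iff_ne_zero.mpr (NeZero.ne n)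
  set d := (v - (i : Fin n)).val with hd
  have hdn : d < n := Fin.is_lt _
  have hvd : (i : Fin n) + (d : Fin n) = v := by
    rw [hd, Fin.cast_val_eq_self]; ring
  set a0 : ℕ := if d < m then d else n - 1 - d with ha0
  have ha0m : a0 < m := by
    rcases lt_or_ge d m with h | h
    · simp [ha0, h]
    · rw [ha0, if_neg (not_lt.mpr h)]; omega
  -- key characterization
  have key : ∀ a : ℕ, a < m →
      ((i : Fin n) + (a : Fin n) = v ∨ (i : Fin n) - 1 - (a : Fin n) = v) → a = a0 := by
    intro a ham hcase
    rcases hcase with h | h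
    · have : (a : Fin n) = (d : Fin n) := by
        rw [hd, Fin.cast_val_eq_self]; linear_combination h
      have had : a = d := fin_cast_inj (by omega) hdn this
      rw [ha0, if_pos (by omega)]; exact had
    · have h1 : (a : Fin n) = (-1 : Fin n) - (v - (i : Fin n)) := by linear_combination -h
      have h2 : (a : Fin n) = ((n - 1 - d : ℕ) : Fin n) := by
        rw [h1, neg_one_sub_val, ← hd]
      have had : a = n - 1 - d := fin_cast_inj (by omega) (by omega) h2
      have hdm : ¬ d < m := by omega
      rw [ha0, if_neg hdm]; exact had
  have hex : (i : Fin n) + (a0 : Fin n) = v ∨ (i : Fin n) - 1 - (a0 : Fin n) = v := by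
    rcases lt_or_ge d m with h | h
    · left; rw [ha0, if_pos h]; exact hvd
    · right
      rw [ha0, if_neg (not_lt.mpr h)]
      have : ((n - 1 - d : ℕ) : Fin n) = (-1 : Fin n) - (d : Fin n) := by
        rw [neg_one_sub_val ((d : ℕ) : Fin n), Fin.val_natCast, Nat.mod_eq_of_lt hdn]
      rw [this]
      linear_combination hvd
  refine ⟨s((i : Fin n) + (a0 : Fin n), (i : Fin n) - 1 - (a0 : Fin n)), ⟨?_, ?_⟩, ?_⟩
  · exact Finset.mem_image.mpr ⟨a0, Finset.mem_range.mpr (by omega), rfl⟩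
  · rcases hex with h | h
    · exact Sym2.mem_iff.mpr (Or.inl h.symm)
    · exact Sym2.mem_iff.mpr (Or.inr h.symm)
  · rintro e' ⟨he', hv⟩
    obtain ⟨a, har, rfl⟩ := Finset.mem_image.mp he'
    have ham : a < m := by have := Finset.mem_range.mp har; omega
    have : a = a0 := by
      apply key a ham
      rcases Sym2.mem_iff.mp hv with h | h
      · exact Or.inl h.symm
      · exact Or.inr h.symm
    rw [this]

lemma disjoint_lemma (hn : Even n) {i j : ℕ} (hi : i < n / 2) (hj : j < n / 2) (hij : i ≠ j) :
    Disjoint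
      ((Finset.range (n / 2)).image
        (fun a : ℕ => s((i : Fin n) + (a : Fin n), (i : Fin n) - 1 - (a : Fin n))))
      ((Finset.range (n / 2)).image
        (fun a : ℕ => s((j : Fin n) + (a : Fin n), (j : Fin n) - 1 - (a : Fin n)))) := by
  obtain ⟨m, hm⟩ := hn
  rw [Finset.disjoint_left]
  rintro e hei hej
  obtain ⟨a, har, rfl⟩ := Finset.mem_image.mp hei
  obtain ⟨b, hbr, heq⟩ := Finset.mem_image.mp hej
  have hsum : (j : Fin n) + (b : Fin n) + ((j : Fin n) - 1 - (b : Fin n)) =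
      (i : Fin n) + (a : Fin n) + ((i : Fin n) - 1 - (a : Fin n)) := by
    rcases Sym2.eq_iff.mp heq with ⟨h1, h2⟩ | ⟨h1, h2⟩
    · rw [h1, h2]
    · rw [h1, h2]; ring
  have h2 : ((2 * i : ℕ) : Fin n) = ((2 * j : ℕ) : Fin n) := by
    push_cast
    linear_combination -hsum
  have := fin_cast_inj (by omega) (by omega) h2
  omega


end Arith

/-- For `n` points `p 0, …, p (n-1)` labeled in convex (radial) order in the
plane, `n` even, the `n/2` matchings
`M i = { {p (i+j-1), p (n+i-j)} : j = 1, …, n/2 }` (indices mod `n`, written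
below with `a = j - 1`) are perfect, non-crossing, and pairwise edge-disjoint;
hence `n/2` pairwise edge-disjoint non-crossing perfect matchings exist. -/
theorem stmt_12 (n : ℕ) [NeZero n] (hn : Even n)
    (p : Fin n → EuclideanSpace ℝ (Fin 2)) (hinj : Function.Injective p)
    (hconv : ∀ i, p i ∉ convexHull ℝ (Set.range p \ {p i}))
    (hconsec : ∀ i : Fin n,
      segment ℝ (p i) (p (i + 1)) ⊆ frontier (convexHull ℝ (Set.range p)))
    (M : ℕ → Finset (Sym2 (Fin n)))
    (hM : ∀ i, M i = (Finset.range (n / 2)).image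
      fun a : ℕ => s((i : Fin n) + (a : Fin n), (i : Fin n) - 1 - (a : Fin n))) :
    (∀ i < n / 2, ∀ v : Fin n, ∃! e, e ∈ M i ∧ v ∈ e) ∧
    (∀ i < n / 2, ∀ u v u' v' : Fin n, s(u, v) ∈ M i → s(u', v') ∈ M i →
      s(u, v) ≠ s(u', v') →
      ∀ x, x ∈ openSegment ℝ (p u) (p v) → x ∉ openSegment ℝ (p u') (p v')) ∧
    (∀ i < n / 2, ∀ j < n / 2, i ≠ j → Disjoint (M i) (M j)) := by
  refine ⟨?_, ?_, ?_⟩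
  · intro i hi v
    rw [hM i]
    exact matching_lemma hn i hi v
  · intro i hi u v u' v' hu hv hne x hx1 hx2
    rw [hM i] at hu hv
    obtain ⟨a, har, hea⟩ := Finset.mem_image.mp hu
    obtain ⟨b, hbr, heb⟩ := Finset.mem_image.mp hv
    have ha2 : a < n / 2 := Finset.mem_range.mp har
    have hb2 : b < n / 2 := Finset.mem_range.mp hbr
    have hx1' : x ∈ openSegment ℝ (p ((i : Fin n) + (a : Fin n)))
        (p ((i : Fin n) - 1 - (a : Fin n))) := by
      rcases Sym2.eq_iff.mp hea with ⟨h1, h2⟩ | ⟨h1, h2⟩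
      · rw [h1, h2]; exact hx1
      · rw [h1, h2, openSegment_symm]; exact hx1
    have hx2' : x ∈ openSegment ℝ (p ((i : Fin n) + (b : Fin n)))
        (p ((i : Fin n) - 1 - (b : Fin n))) := by
      rcases Sym2.eq_iff.mp heb with ⟨h1, h2⟩ | ⟨h1, h2⟩
      · rw [h1, h2]; exact hx2
      · rw [h1, h2, openSegment_symm]; exact hx2
    have hab : a ≠ b := by
      intro h
      apply hne
      rw [← hea, ← heb, h]
    rcases lt_or_gt_of_ne hab with h | h
    · exact crossing_core hinj hconv hconsec i a b h hb2 hx1' hx2'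
    · exact crossing_core hinj hconv hconsec i b a h ha2 hx2' hx1'
  · intro i hi j hj hij
    rw [hM i, hM j]
    exact disjoint_lemma hn hi hj hij
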